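/- arXiv:2605.03679 — 3 statements merged into one kernel-verified Lean document; each statement's English description precedes it below -/
import Mathlib

section
/- For every real p > 1 and every θ with 0 < θ < π/(2p), one has (1/p) tan(pθ) > sin θ / (cos(pθ))^{1/p}. -/
open Real Set

/-- Concavity of `sin` on `[0, π]` gives `q * sin v ≤ sin (q * v)` for `q ∈ [0,1]`. -/
lemma aux_sin_concave {q v : ℝ} (hq0 : 0 ≤ q) (hq1 : q ≤ 1) (hv0 : 0 ≤ v) (hv1 : v ≤ π) :
    q * Real.sin v ≤ Real.sin (q * v) := by
  have h := strictConcaveOn_sin_Icc.concaveOn.2 (x := 0) (y := v)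
    ⟨le_refl 0, Real.pi_pos.le⟩ ⟨hv0, hv1⟩ (by linarith : (0:ℝ) ≤ 1 - q) hq0 (by ring)
  simpa using h

/-- A Bernoulli-type estimate. -/
lemma aux_key1 {q x : ℝ} (hq0 : 0 < q) (hq1 : q < 1) (hx0 : 0 ≤ x) (hx1 : x ≤ 1) :
    3*q - 2 - q^2*x < q^2 * (1 - x) ^ ((3 - q)/2) := by
  have hb : 1 + ((3-q)/2) * (-x) ≤ (1 + (-x)) ^ ((3-q)/2) :=
    one_add_mul_self_le_rpow_one_add (by linarith) (by linarith)
  have h2 : (1 : ℝ) - ((3-q)/2) * x ≤ (1 - x) ^ ((3-q)/2) := by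
    have : (1 : ℝ) + (-x) = 1 - x := by ring
    rw [this] at hb; linarith
  have hq2x : q^2 * x ≤ 1 := by nlinarith
  have hinner : 0 < 2 - q - q^2*x/2 := by linarith
  have hP : 0 < (1-q) * (2 - q - q^2*x/2) := mul_pos (by linarith) hinner
  have h3 : 3*q - 2 - q^2*x < q^2 * (1 - ((3-q)/2) * x) := by nlinarith [hP]
  have h4 : q^2 * (1 - ((3-q)/2) * x) ≤ q^2 * (1 - x) ^ ((3 - q)/2) :=
    mul_le_mul_of_nonneg_left h2 (by positivity)
  linarith

/-- The key bound on the bracket appearing in the derivative. -/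
lemma aux_key2 {q u : ℝ} (hq0 : 0 < q) (hq1 : q < 1) (hu0 : 0 < u) (hu1 : u < π/2) :
    -q^2 < Real.cos u ^ (q-3) * (2 - 3*q + q^2 * Real.sin u ^ 2) := by
  have hc : 0 < Real.cos u := Real.cos_pos_of_mem_Ioo ⟨by linarith [Real.pi_pos], hu1⟩
  have pyth := Real.sin_sq_add_cos_sq u
  have hs0 : (0:ℝ) ≤ Real.sin u ^ 2 := sq_nonneg _
  have hs1 : Real.sin u ^ 2 ≤ 1 := by nlinarith [sq_nonneg (Real.cos u)]
  have h1 := aux_key1 hq0 hq1 hs0 hs1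
  have e1 : (1 - Real.sin u ^ 2 : ℝ) = Real.cos u ^ (2:ℕ) := by nlinarith
  have e2 : ((Real.cos u ^ (2:ℕ) : ℝ)) ^ ((3 - q)/2) = Real.cos u ^ (3 - q) := by
    rw [← Real.rpow_natCast (Real.cos u) 2, ← Real.rpow_mul hc.le]
    congr 1
    ring
  rw [e1, e2] at h1
  -- multiply by cos u ^ (q-3) > 0
  have hc3 : 0 < Real.cos u ^ (q-3) := Real.rpow_pos_of_pos hc _
  have h2 := mul_lt_mul_of_pos_left h1 hc3
  have e3 : Real.cos u ^ (q-3) * (q^2 * Real.cos u ^ (3-q)) = q^2 := by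
    have : Real.cos u ^ (q-3) * Real.cos u ^ (3-q) = 1 := by
      rw [← Real.rpow_add hc]; norm_num
    calc Real.cos u ^ (q-3) * (q^2 * Real.cos u ^ (3-q))
        = q^2 * (Real.cos u ^ (q-3) * Real.cos u ^ (3-q)) := by ring
      _ = q^2 := by rw [this, mul_one]
  rw [e3] at h2
  nlinarith

/-- Positivity of `cos u ^ (q-2) * (1 - q sin² u) - cos (q u)`. -/
lemma aux_Bpos {q u : ℝ} (hq0 : 0 < q) (hq1 : q < 1) (hu0 : 0 < u) (hu1 : u < π/2) :
    Real.cos (q*u) < Real.cos u ^ (q-2) * (1 - q * Real.sin u ^ 2) := by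
  set F : ℝ → ℝ := fun v => Real.cos v ^ (q-2) * (1 - q * Real.sin v ^ 2) - Real.cos (q*v)
    with hF
  have hcpos : ∀ v ∈ Icc (0:ℝ) u, 0 < Real.cos v := by
    intro v hv
    exact Real.cos_pos_of_mem_Ioo ⟨by linarith [Real.pi_pos, hv.1], by linarith [hv.2]⟩
  have hcont : ContinuousOn F (Icc 0 u) := by
    apply ContinuousOn.sub
    · apply ContinuousOn.mul
      · exact Real.continuous_cos.continuousOn.rpow_const
          (fun v hv => Or.inl (hcpos v hv).ne')
      · exact (continuous_const.sub
          (continuous_const.mul (Real.continuous_sin.pow 2))).continuousOn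
    · exact (Real.continuous_cos.comp (continuous_const.mul continuous_id)).continuousOn
  have hderiv : ∀ v ∈ interior (Icc (0:ℝ) u), 0 < deriv F v := by
    intro v hv
    rw [interior_Icc] at hv
    obtain ⟨hv0, hvu⟩ := hv
    have hvπ : v < π/2 := hvu.trans hu1
    have hc : 0 < Real.cos v := Real.cos_pos_of_mem_Ioo ⟨by linarith [Real.pi_pos], hvπ⟩
    have hs : 0 < Real.sin v := Real.sin_pos_of_pos_of_lt_pi hv0 (by linarith [Real.pi_pos])
    have hlin : HasDerivAt (fun w : ℝ => q * w) q v := by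
      simpa using (hasDerivAt_id v).const_mul q
    have hC : HasDerivAt (fun w : ℝ => Real.cos (q*w)) (-Real.sin (q*v) * q) v := by
      exact ((Real.hasDerivAt_cos (q*v)).comp v hlin).congr_deriv (by ring)
    have hA := (Real.hasDerivAt_cos v).rpow_const (p := q-2) (Or.inl hc.ne')
    have hB : HasDerivAt (fun w : ℝ => 1 - q * Real.sin w ^ 2)
        (-(q * ((2:ℕ) * Real.sin v ^ 1 * Real.cos v))) v :=
      (((Real.hasDerivAt_sin v).pow 2).const_mul q).const_sub 1
    have hFd := (hA.mul hB).sub hC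
    have hD : HasDerivAt F
        (Real.sin v * (Real.cos v ^ (q-3) * (2 - 3*q + q^2 * Real.sin v ^ 2))
          + q * Real.sin (q*v)) v := by
      refine hFd.congr_deriv (Eq.symm ?_)
      have e1 : Real.cos v ^ (q-2-1) = Real.cos v ^ (q-3) := by ring_nf
      have e2 : Real.cos v ^ (q-2) = Real.cos v ^ (q-3) * Real.cos v := by
        rw [show q-2 = (q-3)+1 by ring, Real.rpow_add_one hc.ne']
      rw [e1, e2]
      have pyth := Real.sin_sq_add_cos_sq v
      push_cast
      linear_combination (2*q*Real.sin v*Real.cos v ^ (q-3)) * pyth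
    rw [hD.deriv]
    have hkey := aux_key2 hq0 hq1 (hv0) hvπ
    have hsin : q^2 * Real.sin v ≤ q * Real.sin (q*v) := by
      have := aux_sin_concave hq0.le hq1.le hv0.le
        (by linarith [Real.pi_pos] : v ≤ π)
      nlinarith
    nlinarith [mul_lt_mul_of_pos_left hkey hs]
  have mono := strictMonoOn_of_deriv_pos (convex_Icc 0 u) hcont hderiv
  have h := mono (left_mem_Icc.2 hu0.le) (right_mem_Icc.2 hu0.le) hu0
  have hF0 : F 0 = 0 := by simp [hF]
  have hFu : F u = Real.cos u ^ (q-2) * (1 - q * Real.sin u ^ 2) - Real.cos (q*u) := rfl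
  rw [hF0, hFu] at h
  linarith

/-- Main pointwise inequality: `sin (q u) < q sin u (cos u)^(q-1)`. -/
lemma aux_Apos {q u : ℝ} (hq0 : 0 < q) (hq1 : q < 1) (hu0 : 0 < u) (hu1 : u < π/2) :
    Real.sin (q*u) < q * Real.sin u * Real.cos u ^ (q-1) := by
  set A : ℝ → ℝ := fun v => q * Real.sin v * Real.cos v ^ (q-1) - Real.sin (q*v) with hA
  have hcpos : ∀ v ∈ Icc (0:ℝ) u, 0 < Real.cos v := by
    intro v hv
    exact Real.cos_pos_of_mem_Ioo ⟨by linarith [Real.pi_pos, hv.1], by linarith [hv.2]⟩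
  have hcont : ContinuousOn A (Icc 0 u) := by
    apply ContinuousOn.sub
    · apply ContinuousOn.mul
      · exact (continuous_const.mul Real.continuous_sin).continuousOn
      · exact Real.continuous_cos.continuousOn.rpow_const
          (fun v hv => Or.inl (hcpos v hv).ne')
    · exact (Real.continuous_sin.comp (continuous_const.mul continuous_id)).continuousOn
  have hderiv : ∀ v ∈ interior (Icc (0:ℝ) u), 0 < deriv A v := by
    intro v hv
    rw [interior_Icc] at hv
    obtain ⟨hv0, hvu⟩ := hv
    have hvπ : v < π/2 := hvu.trans hu1
    have hc : 0 < Real.cos v := Real.cos_pos_of_mem_Ioo ⟨by linarith [Real.pi_pos], hvπ⟩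
    have hlin : HasDerivAt (fun w : ℝ => q * w) q v := by
      simpa using (hasDerivAt_id v).const_mul q
    have hC : HasDerivAt (fun w : ℝ => Real.sin (q*w)) (Real.cos (q*v) * q) v := by
      exact (Real.hasDerivAt_sin (q*v)).comp v hlin
    have h1 := ((Real.hasDerivAt_sin v).const_mul q).mul
      ((Real.hasDerivAt_cos v).rpow_const (p := q-1) (Or.inl hc.ne'))
    have hAd := h1.sub hC
    have hD : HasDerivAt A
        (q * (Real.cos v ^ (q-2) * (1 - q * Real.sin v ^ 2) - Real.cos (q*v))) v := by
      refine hAd.congr_deriv (Eq.symm ?_)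
      have e1 : Real.cos v ^ (q-1-1) = Real.cos v ^ (q-2) := by ring_nf
      have e2 : Real.cos v ^ (q-1) = Real.cos v ^ (q-2) * Real.cos v := by
        rw [show q-1 = (q-2)+1 by ring, Real.rpow_add_one hc.ne']
      rw [e1, e2]
      have pyth := Real.sin_sq_add_cos_sq v
      push_cast
      linear_combination (-(q * Real.cos v ^ (q-2))) * pyth
    rw [hD.deriv]
    have hB := aux_Bpos hq0 hq1 hv0 hvπ
    have : 0 < Real.cos v ^ (q-2) * (1 - q * Real.sin v ^ 2) - Real.cos (q*v) := by
      linarith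
    positivity
  have mono := strictMonoOn_of_deriv_pos (convex_Icc 0 u) hcont hderiv
  have h := mono (left_mem_Icc.2 hu0.le) (right_mem_Icc.2 hu0.le) hu0
  have hA0 : A 0 = 0 := by simp [hA]
  have hAu : A u = q * Real.sin u * Real.cos u ^ (q-1) - Real.sin (q*u) := rfl
  rw [hA0, hAu] at h
  linarith

/-- **A trigonometric inequality.**  For `p > 1` and `0 < θ < π/(2p)`,
`(1/p) tan(pθ) > sin θ / (cos(pθ))^{1/p}`. -/
theorem trig_inequality (p θ : ℝ) (hp : 1 < p) (hθ₀ : 0 < θ) (hθ₁ : θ < π / (2 * p)) :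
    Real.sin θ / (Real.cos (p * θ)) ^ (1 / p) < Real.tan (p * θ) / p := by
  have hp0 : 0 < p := lt_trans one_pos hp
  set q : ℝ := 1/p with hq
  set u : ℝ := p * θ with hu
  have hq0 : 0 < q := by positivity
  have hq1 : q < 1 := by rw [hq]; exact (div_lt_one hp0).2 hp
  have hu0 : 0 < u := mul_pos hp0 hθ₀
  have hu1 : u < π/2 := by
    have h1 : p * θ < p * (π / (2 * p)) := mul_lt_mul_of_pos_left hθ₁ hp0
    have h2 : p * (π / (2 * p)) = π/2 := by field_simp
    rw [hu]; linarith [h2 ▸ h1]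
  have hθu : θ = q * u := by rw [hq, hu]; field_simp
  have hc : 0 < Real.cos u := Real.cos_pos_of_mem_Ioo ⟨by linarith [Real.pi_pos], hu1⟩
  have key := aux_Apos hq0 hq1 hu0 hu1
  rw [← hθu] at key
  rw [Real.tan_eq_sin_div_cos, div_div,
    div_lt_div_iff₀ (Real.rpow_pos_of_pos hc q) (by positivity : (0:ℝ) < Real.cos u * p)]
  have h1 : Real.cos u ^ (q-1) * Real.cos u = Real.cos u ^ q := by
    rw [← Real.rpow_add_one hc.ne' (q-1)]; ring_nf
  have hqp : q * p = 1 := by rw [hq]; field_simp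
  calc Real.sin θ * (Real.cos u * p)
      < q * Real.sin u * Real.cos u ^ (q-1) * (Real.cos u * p) :=
        mul_lt_mul_of_pos_right key (by positivity)
    _ = (q * p) * (Real.sin u * (Real.cos u ^ (q-1) * Real.cos u)) := by ring
    _ = Real.sin u * Real.cos u ^ q := by rw [hqp, h1, one_mul]
end

section
/- Let p, q > 1 with 1/p + 1/q = 1, let a, b > 0, and let 0 < α < (1/2)(b/a)^{1/q}. Then there exists θ ∈ (0, π/(2p)) such that a/2 < (2α)^{−1} (tan(pθ))/p − (qb/2)^{−p/q} (sin θ)^p / (p cos(pθ)). -/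
open Real

set_option maxHeartbeats 2000000

lemma hasDerivAt_good_angle (p C K : ℝ) (hp : 1 < p) (θ : ℝ) (hθ : 0 < θ)
    (hθ' : p * θ < π / 2) :
    HasDerivAt (fun x => K * Real.tan (p * x) / p
        - C * Real.sin x ^ p / (p * Real.cos (p * x)))
      ((K - C * Real.sin θ ^ (p - 1) * Real.cos ((p - 1) * θ)) / Real.cos (p * θ) ^ 2) θ := by
  have hp0 : (0:ℝ) < p := lt_trans one_pos hp
  have hpθ : 0 < p * θ := by positivity
  have hcos : 0 < Real.cos (p * θ) :=
    Real.cos_pos_of_mem_Ioo ⟨by linarith, hθ'⟩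
  have hθpi : θ < π := by nlinarith [Real.pi_pos]
  have hsin : 0 < Real.sin θ := Real.sin_pos_of_pos_of_lt_pi hθ hθpi
  have hpx : HasDerivAt (fun x : ℝ => p * x) p θ := by
    simpa using (hasDerivAt_id θ).const_mul p
  have htan : HasDerivAt (fun x => Real.tan (p * x)) (1 / Real.cos (p * θ) ^ 2 * p) θ :=
    (Real.hasDerivAt_tan hcos.ne').comp θ hpx
  have h1 : HasDerivAt (fun x => K * Real.tan (p * x) / p)
      (K * (1 / Real.cos (p * θ) ^ 2 * p) / p) θ := (htan.const_mul K).div_const p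
  have hsinp : HasDerivAt (fun x => Real.sin x ^ p)
      (p * Real.sin θ ^ (p - 1) * Real.cos θ) θ :=
    (Real.hasDerivAt_rpow_const (Or.inr hp.le)).comp θ (Real.hasDerivAt_sin θ)
  have hu : HasDerivAt (fun x => C * Real.sin x ^ p)
      (C * (p * Real.sin θ ^ (p - 1) * Real.cos θ)) θ := hsinp.const_mul C
  have hv : HasDerivAt (fun x => p * Real.cos (p * x)) (p * (-Real.sin (p * θ) * p)) θ :=
    (((Real.hasDerivAt_cos (p * θ)).comp θ hpx)).const_mul p
  have hvne : p * Real.cos (p * θ) ≠ 0 := by positivity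
  have h2 := hu.div hv hvne
  have H := h1.sub h2
  refine H.congr_deriv ?_
  have e1 : (p - 1) * θ = p * θ - θ := by ring
  have e2 : Real.sin θ ^ p = Real.sin θ ^ (p - 1) * Real.sin θ := by
    rw [← Real.rpow_add_one hsin.ne' (p - 1)]
    norm_num
  rw [e1, Real.cos_sub, e2]
  field_simp
  ring

/-- **Existence of a good angle.**  For Hölder conjugate `p, q > 1`, `a, b > 0`, and
`0 < α < (1/2)(b/a)^{1/q}`, there exists `θ ∈ (0, π/(2p))` with
`a/2 < (2α)⁻¹ tan(pθ)/p - (qb/2)^{-p/q} (sin θ)^p / (p cos(pθ))`. -/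
theorem good_angle_exists
    (p q a b α : ℝ) (hp : 1 < p) (hq : 1 < q) (hpq : 1 / p + 1 / q = 1)
    (ha : 0 < a) (hb : 0 < b)
    (hα₀ : 0 < α) (hα₁ : α < 1 / 2 * (b / a) ^ (1 / q)) :
    ∃ θ : ℝ, 0 < θ ∧ θ < π / (2 * p) ∧
      a / 2 < (2 * α)⁻¹ * Real.tan (p * θ) / p
        - (q * b / 2) ^ (-(p / q)) * (Real.sin θ) ^ p / (p * Real.cos (p * θ)) := by
  have hp0 : (0:ℝ) < p := lt_trans one_pos hp
  have hq0 : (0:ℝ) < q := lt_trans one_pos hq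
  have hpq' : p - 1 = p / q := by
    field_simp
    field_simp at hpq
    linarith
  set K : ℝ := (2 * α)⁻¹ with hKdef
  set C : ℝ := (q * b / 2) ^ (-(p / q)) with hCdef
  have hK : 0 < K := by rw [hKdef]; positivity
  have hC : 0 < C := by rw [hCdef]; exact Real.rpow_pos_of_pos (by positivity) _
  have hba : (0:ℝ) < (b / a) ^ (1 / q) := Real.rpow_pos_of_pos (by positivity) _
  have hKab : (a / b) ^ (1 / q) < K := by
    have h2α : 2 * α < (b / a) ^ (1 / q) := by linarith
    have hinv : ((b / a) ^ (1 / q))⁻¹ < (2 * α)⁻¹ := by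
      exact inv_strictAnti₀ (by positivity) h2α
    have heq : ((b / a) ^ (1 / q))⁻¹ = (a / b) ^ (1 / q) := by
      rw [← Real.inv_rpow (by positivity), inv_div]
    rw [← heq]; exact hinv
  set tstar : ℝ := (K / C) ^ (q / p) with htdef
  have ht0 : 0 < tstar := Real.rpow_pos_of_pos (by positivity) _
  have htp : tstar ^ (p - 1) = K / C := by
    rw [htdef, ← Real.rpow_mul (by positivity : (0:ℝ) ≤ K / C),
      show q / p * (p - 1) = 1 by rw [hpq']; field_simp]
    exact Real.rpow_one _
  have hKt : K * tstar = K ^ q * (q * b / 2) := by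
    have hCq : C ^ (q / p) = (q * b / 2)⁻¹ := by
      rw [hCdef, ← Real.rpow_mul (by positivity : (0:ℝ) ≤ q * b / 2),
        show -(p / q) * (q / p) = -1 by field_simp]
      exact Real.rpow_neg_one _
    have hdiv : tstar = K ^ (q / p) * (q * b / 2) := by
      rw [htdef, Real.div_rpow hK.le hC.le, hCq, div_eq_mul_inv, inv_inv]
    rw [hdiv, ← mul_assoc]
    congr 1
    rw [show K * K ^ (q / p) = K ^ (1:ℝ) * K ^ (q / p) by rw [Real.rpow_one],
      ← Real.rpow_add hK]
    congr 1
    field_simp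
    field_simp at hpq
    linarith
  have hmain : a / 2 < K ^ q * b / 2 := by
    have h1 : ((a / b) ^ (1 / q)) ^ q < K ^ q :=
      Real.rpow_lt_rpow (Real.rpow_nonneg (by positivity) _) hKab hq0
    have h2 : ((a / b) ^ (1 / q)) ^ q = a / b := by
      rw [← Real.rpow_mul (by positivity : (0:ℝ) ≤ a / b),
        show 1 / q * q = 1 by field_simp]
      exact Real.rpow_one _
    rw [h2] at h1
    have : a < K ^ q * b := by
      rw [div_lt_iff₀ hb] at h1; linarith
    linarith
  set θstar : ℝ := π / (2 * p) with hθsdef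
  have hθs0 : 0 < θstar := by rw [hθsdef]; positivity
  have hpθs : p * θstar = π / 2 := by rw [hθsdef]; field_simp
  have hθslt : θstar < π / 2 := by
    rw [hθsdef, div_lt_div_iff₀ (by positivity) (by norm_num)]
    linarith [mul_pos Real.pi_pos (sub_pos.mpr hp)]
  clear_value K C tstar θstar
  rcases lt_or_ge tstar θstar with hA | hB
  · -- Case A : tstar < θstar, take θ = tstar
    refine ⟨tstar, ht0, hA, ?_⟩
    have hcosIcc : ∀ x ∈ Set.Icc (0:ℝ) tstar, p * x < π / 2 := by
      intro x hx
      have : p * x ≤ p * tstar := mul_le_mul_of_nonneg_left hx.2 hp0.le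
      have h2 : p * tstar < p * θstar := mul_lt_mul_of_pos_left hA hp0
      rw [hpθs] at h2; linarith
    have hder : ∀ x ∈ Set.Ioo (0:ℝ) tstar,
        HasDerivAt (fun x => K * Real.tan (p * x) / p
            - C * Real.sin x ^ p / (p * Real.cos (p * x)) - (K * x - C * x ^ p / p))
          ((K - C * Real.sin x ^ (p - 1) * Real.cos ((p - 1) * x)) / Real.cos (p * x) ^ 2
            - (K - C * (p * x ^ (p - 1)) / p)) x := by
      intro x hx
      have hx2 : p * x < π / 2 := hcosIcc x ⟨hx.1.le, hx.2.le⟩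
      have hid : HasDerivAt (fun y : ℝ => K * y) K x := by
        simpa using (hasDerivAt_id x).const_mul K
      have hxp : HasDerivAt (fun y : ℝ => C * y ^ p / p) (C * (p * x ^ (p - 1)) / p) x :=
        ((Real.hasDerivAt_rpow_const (Or.inl hx.1.ne')).const_mul C).div_const p
      exact (hasDerivAt_good_angle p C K hp x hx.1 hx2).sub (hid.sub hxp)
    have hcont : ContinuousOn (fun x => K * Real.tan (p * x) / p
        - C * Real.sin x ^ p / (p * Real.cos (p * x)) - (K * x - C * x ^ p / p))
        (Set.Icc (0:ℝ) tstar) := by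
      intro x hx
      have hx2 : p * x < π / 2 := hcosIcc x hx
      have hpx0 : 0 ≤ p * x := mul_nonneg hp0.le hx.1
      have hcosx : 0 < Real.cos (p * x) :=
        Real.cos_pos_of_mem_Ioo ⟨by linarith [Real.pi_pos], hx2⟩
      have cmul : ContinuousAt (fun y : ℝ => p * y) x := by fun_prop
      have c1 : ContinuousAt (fun y => Real.tan (p * y)) x :=
        (Real.continuousAt_tan.mpr hcosx.ne').comp cmul
      have c2 : ContinuousAt (fun y => Real.sin y ^ p) x :=
        (Real.continuous_sin.rpow_const (fun _ => Or.inr hp0.le)).continuousAt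
      have c3 : ContinuousAt (fun y => p * Real.cos (p * y)) x := by fun_prop
      have c4 : ContinuousAt (fun y : ℝ => y ^ p) x :=
        (continuous_id.rpow_const (fun _ => Or.inr hp0.le)).continuousAt
      refine ContinuousAt.continuousWithinAt ?_
      exact (((c1.const_mul K).div_const p).sub
        ((c2.const_mul C).div c3 (mul_pos hp0 hcosx).ne')).sub
        ((continuousAt_id.const_mul K).sub ((c4.const_mul C).div_const p))
    have hmono : MonotoneOn (fun x => K * Real.tan (p * x) / p
        - C * Real.sin x ^ p / (p * Real.cos (p * x)) - (K * x - C * x ^ p / p))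
        (Set.Icc (0:ℝ) tstar) := by
      apply monotoneOn_of_deriv_nonneg (convex_Icc _ _) hcont
      · intro x hx
        rw [interior_Icc] at hx
        exact ((hder x hx).differentiableAt).differentiableWithinAt
      · intro x hx
        rw [interior_Icc] at hx
        rw [(hder x hx).deriv]
        have hx2 : p * x < π / 2 := hcosIcc x ⟨hx.1.le, hx.2.le⟩
        have hxpos : 0 < x := hx.1
        have hxlt : x < tstar := hx.2
        have hpx0 : 0 ≤ p * x := mul_nonneg hp0.le hxpos.le
        have hcosx : 0 < Real.cos (p * x) :=
          Real.cos_pos_of_mem_Ioo ⟨by linarith [Real.pi_pos], hx2⟩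
        have hsx0 : 0 ≤ Real.sin x :=
          Real.sin_nonneg_of_nonneg_of_le_pi hxpos.le
            (by linarith [Real.pi_pos])
        have h1 : Real.sin x ^ (p - 1) ≤ x ^ (p - 1) :=
          Real.rpow_le_rpow hsx0 (Real.sin_le hx.1.le) (by linarith)
        have h2 : Real.cos ((p - 1) * x) ≤ 1 := Real.cos_le_one _
        have hsp0 : 0 ≤ Real.sin x ^ (p - 1) := Real.rpow_nonneg hsx0 _
        have h3 : C * Real.sin x ^ (p - 1) * Real.cos ((p - 1) * x) ≤ C * x ^ (p - 1) := by
          have h3a := mul_le_mul_of_nonneg_left h2 (mul_nonneg hC.le hsp0)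
          have h3b := mul_le_mul_of_nonneg_left h1 hC.le
          linarith [h3a, h3b]
        have h4 : C * x ^ (p - 1) ≤ K := by
          have : x ^ (p - 1) ≤ tstar ^ (p - 1) :=
            Real.rpow_le_rpow hx.1.le hx.2.le (by linarith)
          rw [htp] at this
          calc C * x ^ (p - 1) ≤ C * (K / C) := mul_le_mul_of_nonneg_left this hC.le
            _ = K := by field_simp
        have hnum : 0 ≤ K - C * Real.sin x ^ (p - 1) * Real.cos ((p - 1) * x) := by linarith
        have hcos2 : Real.cos (p * x) ^ 2 ≤ 1 := by
          linarith [Real.sin_sq_add_cos_sq (p * x), sq_nonneg (Real.sin (p * x))]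
        have hcos2' : 0 < Real.cos (p * x) ^ 2 := by positivity
        have h5 : K - C * Real.sin x ^ (p - 1) * Real.cos ((p - 1) * x) ≤
            (K - C * Real.sin x ^ (p - 1) * Real.cos ((p - 1) * x)) / Real.cos (p * x) ^ 2 := by
          rw [le_div_iff₀ hcos2']
          linarith [mul_nonneg hnum (sub_nonneg.mpr hcos2)]
        have h6 : C * (p * x ^ (p - 1)) / p = C * x ^ (p - 1) := by field_simp
        rw [h6]
        linarith
    have hkey := hmono (Set.mem_Icc.mpr ⟨le_rfl, ht0.le⟩)
      (Set.mem_Icc.mpr ⟨ht0.le, le_rfl⟩) ht0.le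
    have hz : K * Real.tan (p * 0) / p - C * Real.sin 0 ^ p / (p * Real.cos (p * 0))
        - (K * 0 - C * (0:ℝ) ^ p / p) = 0 := by
      norm_num [Real.zero_rpow hp0.ne', Real.tan_zero]
    simp only at hkey
    rw [hz] at hkey
    have hts : C * tstar ^ p = K * tstar := by
      have h7 : tstar ^ p = tstar ^ (p - 1) * tstar := by
        rw [← Real.rpow_add_one ht0.ne' (p - 1)]
        norm_num
      rw [h7, htp]
      field_simp
    have hfin : K * tstar - C * tstar ^ p / p = K ^ q * b / 2 := by
      rw [hts, hKt]
      have h1p : 1 - 1 / p = 1 / q := by linarith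
      have he : K ^ q * (q * b / 2) - K ^ q * (q * b / 2) / p
          = K ^ q * (q * b / 2) * (1 - 1 / p) := by ring
      rw [he, h1p]
      field_simp
    -- hkey : 0 - 0 ≤ F tstar - (K*tstar - C*tstar^p/p)  (roughly)
    have : a / 2 < K * tstar - C * tstar ^ p / p := by rw [hfin]; linarith
    linarith [hkey]
  · -- Case B : θstar ≤ tstar, take θ close to θstar
    have hcs : 0 < Real.cos θstar := Real.cos_pos_of_mem_Ioo ⟨by linarith, hθslt⟩
    have hss0 : 0 ≤ Real.sin θstar :=
      Real.sin_nonneg_of_nonneg_of_le_pi hθs0.le (by linarith [Real.pi_pos])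
    have hσ1 : Real.sin θstar < 1 := by
      linarith [Real.sin_sq_add_cos_sq θstar, mul_pos hcs hcs,
        sq_nonneg (1 - Real.sin θstar)]
    set ε : ℝ := 1 - Real.sin θstar with hεdef
    have hε : 0 < ε := by rw [hεdef]; linarith
    set δ : ℝ := min (min 1 (Real.sqrt ε)) (K * ε / (2 * p * a)) with hδdef
    have hδ0 : 0 < δ :=
      lt_min (lt_min one_pos (Real.sqrt_pos.mpr hε)) (by positivity)
    have hδ1 : δ ≤ 1 := le_trans (min_le_left _ _) (min_le_left _ _)
    have hδsq : δ ^ 2 ≤ ε := by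
      have h1 : δ ≤ Real.sqrt ε := le_trans (min_le_left _ _) (min_le_right _ _)
      linarith [mul_self_le_mul_self hδ0.le h1, Real.sq_sqrt hε.le,
        sq_nonneg δ, sq_nonneg (Real.sqrt ε)]
    have hδa : δ ≤ K * ε / (2 * p * a) := min_le_right _ _
    clear_value ε δ
    refine ⟨(π / 2 - δ) / p, ?_, ?_, ?_⟩
    · apply div_pos _ hp0
      linarith [Real.pi_gt_three]
    · rw [hθsdef, show π / (2 * p) = (π / 2) / p by ring]
      gcongr
      linarith
    · set θ : ℝ := (π / 2 - δ) / p with hθdef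
      clear_value θ
      have hθ0 : 0 < θ := by
        rw [hθdef]; apply div_pos _ hp0; linarith [Real.pi_gt_three]
      have hθlt : θ < θstar := by
        rw [hθdef, hθsdef, show π / (2 * p) = (π / 2) / p by ring]
        gcongr
        linarith
      have hpθ : p * θ = π / 2 - δ := by rw [hθdef]; field_simp
      have hcospθ : Real.cos (p * θ) = Real.sin δ := by
        rw [hpθ, Real.cos_pi_div_two_sub]
      have hsinpθ : Real.sin (p * θ) = Real.cos δ := by
        rw [hpθ, Real.sin_pi_div_two_sub]
      have hsinδ : 0 < Real.sin δ :=
        Real.sin_pos_of_pos_of_lt_pi hδ0 (by linarith [Real.pi_gt_three])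
      have hsinδle : Real.sin δ ≤ δ := Real.sin_le hδ0.le
      have hsθ0 : 0 < Real.sin θ :=
        Real.sin_pos_of_pos_of_lt_pi hθ0 (by linarith [Real.pi_pos])
      have s1 : Real.sin θ ≤ Real.sin θstar :=
        Real.sin_le_sin_of_le_of_le_pi_div_two (by linarith) hθslt.le hθlt.le
      have s2 : Real.sin θ ^ (p - 1) ≤ θstar ^ (p - 1) :=
        Real.rpow_le_rpow hsθ0.le
          (le_trans (Real.sin_le hθ0.le) hθlt.le) (by linarith)
      have s3 : C * θstar ^ (p - 1) ≤ K := by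
        have : θstar ^ (p - 1) ≤ tstar ^ (p - 1) :=
          Real.rpow_le_rpow hθs0.le hB (by linarith)
        rw [htp] at this
        calc C * θstar ^ (p - 1) ≤ C * (K / C) := mul_le_mul_of_nonneg_left this hC.le
          _ = K := by field_simp
      have s4 : Real.sin θ ^ p = Real.sin θ ^ (p - 1) * Real.sin θ := by
        rw [← Real.rpow_add_one hsθ0.ne' (p - 1)]
        norm_num
      have sbound : C * Real.sin θ ^ p ≤ K * Real.sin θstar := by
        rw [s4]
        have t1 : C * Real.sin θ ^ (p - 1) ≤ C * θstar ^ (p - 1) :=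
          mul_le_mul_of_nonneg_left s2 hC.le
        have hst0 : 0 ≤ θstar ^ (p - 1) := Real.rpow_nonneg hθs0.le _
        calc C * (Real.sin θ ^ (p - 1) * Real.sin θ)
            = C * Real.sin θ ^ (p - 1) * Real.sin θ := by ring
          _ ≤ C * θstar ^ (p - 1) * Real.sin θstar :=
              mul_le_mul t1 s1 hsθ0.le (by positivity)
          _ ≤ K * Real.sin θstar := mul_le_mul_of_nonneg_right s3 hss0
      have cosδb : 1 - ε / 2 ≤ Real.cos δ := by
        have := Real.one_sub_sq_div_two_le_cos (x := δ)
        linarith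
      have hnum : K * ε / 2 ≤ K * Real.cos δ - C * Real.sin θ ^ p := by
        have hc1 : K * (1 - ε / 2) ≤ K * Real.cos δ :=
          mul_le_mul_of_nonneg_left cosδb hK.le
        have hKσ : K * Real.sin θstar = K - K * ε := by rw [hεdef]; ring
        linarith [sbound, hc1, hKσ]
      rw [Real.tan_eq_sin_div_cos, hsinpθ, hcospθ]
      have hcomb : K * (Real.cos δ / Real.sin δ) / p - C * Real.sin θ ^ p / (p * Real.sin δ)
          = (K * Real.cos δ - C * Real.sin θ ^ p) / (p * Real.sin δ) := by
        field_simp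
      rw [hcomb, lt_div_iff₀ (by positivity : (0:ℝ) < p * Real.sin δ)]
      have u1 : a / 2 * (p * Real.sin δ) ≤ a / 2 * (p * δ) := by
        linarith [mul_nonneg (mul_nonneg ha.le hp0.le) (sub_nonneg.mpr hsinδle)]
      have hδa' : δ * (2 * p * a) ≤ K * ε := by
        rw [← le_div_iff₀ (by positivity : (0:ℝ) < 2 * p * a)]
        exact hδa
      have u2 : a / 2 * (p * δ) ≤ K * ε / 4 := by linarith [hδa']
      have u3 : K * ε / 4 < K * ε / 2 := by linarith [mul_pos hK hε]
      linarith
end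

section
/- Let T ⊂ (0,∞), let h > 0 and R₀ > 0 be such that every interval [u, u+h] with u ≥ R₀ contains a point of T, and let L > 0 and M ∈ ℕ with h < L/M. Then there exists a subset T' ⊂ T such that: (1) T' is uniformly discrete with inf_{s≠t ∈ T'} |s − t| ≥ L/M − h, and (2) there exists n₀ ∈ ℕ such that for every n ≥ n₀ the interval [nL, (n+1)L) contains exactly M points of T'. -/
open Real Set

/-- **Selecting a regular uniformly discrete subsequence.**  If every interval `[u, u+h]` with
`u ≥ R₀` contains a point of `T ⊂ (0,∞)`, and `h < L/M`, then there is a subset `T' ⊆ T`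
which is uniformly discrete with separation at least `L/M - h` and which has exactly `M`
points in each interval `[nL, (n+1)L)` for all sufficiently large `n`. -/
theorem select_regular_subsequence
    (T : Set ℝ) (hT : T ⊆ Set.Ioi 0)
    (h R₀ : ℝ) (hh : 0 < h) (hR₀ : 0 < R₀)
    (hfill : ∀ u : ℝ, R₀ ≤ u → ∃ t ∈ T, t ∈ Set.Icc u (u + h))
    (L : ℝ) (hL : 0 < L) (M : ℕ) (hMh : h < L / M) :
    ∃ T' : Set ℝ, T' ⊆ T ∧
      (∀ s ∈ T', ∀ t ∈ T', s ≠ t → L / M - h ≤ |s - t|) ∧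
      ∃ n₀ : ℕ, ∀ n : ℕ, n₀ ≤ n →
        (T' ∩ Set.Ico ((n : ℝ) * L) (((n : ℝ) + 1) * L)).ncard = M := by
  have hM : 0 < M := by
    rcases Nat.eq_zero_or_pos M with hM | hM
    · subst hM; simp at hMh; linarith
    · exact hM
  have hM' : (0:ℝ) < M := by exact_mod_cast hM
  set δ := L / M with hδdef
  have hδ : 0 < δ := div_pos hL hM'
  have hMδ : (M:ℝ) * δ = L := by rw [hδdef, mul_div_assoc', mul_div_cancel_left₀ L hM'.ne']
  set n₀ := ⌈R₀ / L⌉₊ with hn₀def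
  have hn₀L : R₀ ≤ (n₀ : ℝ) * L := by
    rw [← div_le_iff₀ hL]
    exact Nat.le_ceil _
  set j₀ := n₀ * M with hj₀def
  have hbase : ∀ j : ℕ, j₀ ≤ j → R₀ ≤ (j:ℝ) * δ := by
    intro j hj
    have hjR : (j₀ : ℝ) ≤ (j : ℝ) := by exact_mod_cast hj
    calc R₀ ≤ (n₀ : ℝ) * L := hn₀L
      _ = (j₀ : ℝ) * δ := by push_cast [hj₀def]; rw [mul_assoc, hMδ]
      _ ≤ (j : ℝ) * δ := by nlinarith
  have hex : ∀ j : ℕ, ∃ t, j₀ ≤ j →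
      t ∈ T ∧ t ∈ Set.Icc ((j:ℝ)*δ) ((j:ℝ)*δ + h) := by
    intro j
    by_cases hj : j₀ ≤ j
    · obtain ⟨t, ht, htI⟩ := hfill _ (hbase j hj)
      exact ⟨t, fun _ => ⟨ht, htI⟩⟩
    · exact ⟨0, fun hj' => absurd hj' hj⟩
  choose g hg using hex
  -- separation between indices
  have hsep : ∀ j k : ℕ, j₀ ≤ j → j₀ ≤ k → j < k → δ - h ≤ g k - g j := by
    intro j k hj hk hjk
    obtain ⟨-, hj1, hj2⟩ := hg j hj
    obtain ⟨-, hk1, hk2⟩ := hg k hk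
    have : (j:ℝ) + 1 ≤ (k:ℝ) := by exact_mod_cast hjk
    nlinarith
  have hinj : Set.InjOn g {j | j₀ ≤ j} := by
    intro j hj k hk hjk
    by_contra hne
    rcases lt_or_gt_of_ne hne with hlt | hlt
    · have := hsep j k hj hk hlt; rw [hjk] at this; linarith
    · have := hsep k j hk hj hlt; rw [hjk] at this; linarith
  refine ⟨g '' {j | j₀ ≤ j}, ?_, ?_, n₀, ?_⟩
  · rintro x ⟨j, hj, rfl⟩
    exact (hg j hj).1
  · rintro s ⟨j, hj, rfl⟩ t ⟨k, hk, rfl⟩ hst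
    have hne : j ≠ k := fun hjk => hst (by rw [hjk])
    rcases lt_or_gt_of_ne hne with hlt | hlt
    · have := hsep j k hj hk hlt
      rw [abs_sub_comm, abs_of_nonneg (by linarith)]
      linarith
    · have := hsep k j hk hj hlt
      rw [abs_of_nonneg (by linarith)]
      linarith
  · intro n hn
    have hnM : j₀ ≤ n * M := Nat.mul_le_mul_right M hn
    have key : g '' {j | j₀ ≤ j} ∩ Set.Ico ((n : ℝ) * L) (((n : ℝ) + 1) * L)
        = g '' Set.Ico (n * M) (n * M + M) := by
      ext x
      constructor
      · rintro ⟨⟨j, hj, rfl⟩, hx1, hx2⟩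
        obtain ⟨-, hb1, hb2⟩ := hg j hj
        refine ⟨j, ⟨?_, ?_⟩, rfl⟩
        · by_contra hc
          push_neg at hc
          have : (j:ℝ) + 1 ≤ (n * M : ℕ) := by exact_mod_cast hc
          have hcast : ((n * M : ℕ) : ℝ) * δ = (n : ℝ) * L := by
            push_cast; rw [mul_assoc, hMδ]
          nlinarith
        · by_contra hc
          push_neg at hc
          have : ((n * M + M : ℕ) : ℝ) ≤ (j : ℝ) := by exact_mod_cast hc
          have hcast : ((n * M + M : ℕ) : ℝ) * δ = ((n:ℝ) + 1) * L := by
            push_cast; rw [add_mul, mul_assoc, hMδ]; ring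
          nlinarith
      · rintro ⟨j, ⟨hj1, hj2⟩, rfl⟩
        have hj : j₀ ≤ j := le_trans hnM hj1
        obtain ⟨-, hb1, hb2⟩ := hg j hj
        have h1 : ((n * M : ℕ) : ℝ) ≤ (j : ℝ) := by exact_mod_cast hj1
        have h2 : (j:ℝ) + 1 ≤ ((n * M + M : ℕ) : ℝ) := by exact_mod_cast hj2
        have hcast : ((n * M : ℕ) : ℝ) * δ = (n : ℝ) * L := by
          push_cast; rw [mul_assoc, hMδ]
        have hcast2 : ((n * M + M : ℕ) : ℝ) * δ = ((n:ℝ) + 1) * L := by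
          push_cast; rw [add_mul, mul_assoc, hMδ]; ring
        refine ⟨⟨j, hj, rfl⟩, ?_, ?_⟩
        · nlinarith
        · nlinarith
    rw [key, Set.ncard_image_of_injOn (hinj.mono (fun j hj => le_trans hnM hj.1)),
      ← Finset.coe_Ico, Set.ncard_coe_finset, Nat.card_Ico]
    omega
end
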